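/- Let η : ℝⁿ → ℝ be C² on a neighborhood of 0 with ∇η(0) = 0 and with B := ∇²η(0) positive definite. Let Q : ℝⁿ → ℝⁿ be defined near 0, differentiable at 0, with Q(0) = 0 and with ∇Q(0) = [[0,0],[0,Θ]] in block form for some invertible m×m matrix Θ. Assume there exist c > 0 and δ > 0 such that ∇η(u)·Q(u) ≤ −c|Q(u)|² for all |u| < δ. Then B∇Q(0) + ∇Q(0)ᵀB = −[[0,0],[0,M]] where M := −(B₄Θ + ΘᵀB₄); in particular ΘᵀB₂ = 0. Moreover M is symmetric and positive definite, and in fact M ≥ 2c ΘᵀΘ in the sense of quadratic forms. -/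

import Mathlib

open Matrix Filter Topology

/-- The Jacobian matrix of a map at a point: `(jacM f u) i j = ∂fᵢ/∂uⱼ (u)`. -/
noncomputable def jacM {ι : Type*} [Fintype ι] [DecidableEq ι]
    (f : (ι → ℝ) → (ι → ℝ)) (u : ι → ℝ) : Matrix ι ι ℝ :=
  Matrix.of fun i j => fderiv ℝ f u (Pi.single j 1) i

/-- The gradient of a scalar function. -/
noncomputable def gradV {ι : Type*} [Fintype ι] [DecidableEq ι]
    (f : (ι → ℝ) → ℝ) (u : ι → ℝ) : ι → ℝ :=
  fun i => fderiv ℝ f u (Pi.single i 1)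

/-- The Hessian matrix of a scalar function: `(hessM f u) j k = ∂²f/∂uⱼ∂u_k (u)`. -/
noncomputable def hessM {ι : Type*} [Fintype ι] [DecidableEq ι]
    (f : (ι → ℝ) → ℝ) (u : ι → ℝ) : Matrix ι ι ℝ :=
  Matrix.of fun j k => fderiv ℝ (fun x => fderiv ℝ f x (Pi.single k 1)) u (Pi.single j 1)

section aux

variable {ι : Type*} [Fintype ι] [DecidableEq ι]

lemma aux_single_smul_one (i : ι) (a : ℝ) :
    (Pi.single i a : ι → ℝ) = a • (Pi.single i 1 : ι → ℝ) := by
  funext j; by_cases h : j = i <;> simp [Pi.single_apply, h]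

lemma aux_clm_eval (L : (ι → ℝ) →L[ℝ] ℝ) (w : ι → ℝ) :
    L w = ∑ i, w i * L (Pi.single i 1) := by
  conv_lhs => rw [← Finset.univ_sum_single w]
  rw [map_sum]
  congr 1; funext i
  rw [aux_single_smul_one, _root_.map_smul, smul_eq_mul]

lemma aux_clm_eval_vec (D : (ι → ℝ) →L[ℝ] (ι → ℝ)) (w : ι → ℝ) (i : ι) :
    D w i = ∑ j, D (Pi.single j 1) i * w j := by
  conv_lhs => rw [← Finset.univ_sum_single w]
  rw [map_sum]
  simp only [Finset.sum_apply]
  congr 1; funext j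
  rw [aux_single_smul_one, _root_.map_smul]
  simp [mul_comm]

lemma aux_eq_zero_of_forall_mul_le {p C : ℝ} (h : ∀ l : ℝ, l * p ≤ C) : p = 0 := by
  by_contra hp
  have h1 := h ((C + 1) / p)
  rw [div_mul_cancel₀ _ hp] at h1
  linarith

lemma aux_isHermitian_of_isSymm {n : Type*} {M : Matrix n n ℝ} (h : M.IsSymm) :
    M.IsHermitian := by
  rw [Matrix.IsHermitian]
  ext i j
  rw [Matrix.conjTranspose_apply, star_trivial]
  exact congrFun (congrFun h i) j

lemma aux_dotProduct_self_nonneg (w : ι → ℝ) : 0 ≤ w ⬝ᵥ w :=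
  Finset.sum_nonneg fun i _ => mul_self_nonneg _

end aux

set_option maxHeartbeats 2000000 in
/-- Dissipative structure lemma: with `n = r + m`, `η` C² near `0`,
`∇η(0) = 0`, `B := ∇²η(0)` positive definite, `Q(0) = 0`, `∇Q(0) = [[0,0],[0,Θ]]` with `Θ`
invertible, and the entropy dissipation inequality `∇η(u)·Q(u) ≤ −c|Q(u)|²` for `|u| < δ`,
one has `B∇Q(0) + ∇Q(0)ᵀB = −[[0,0],[0,M]]` with `M := −(B₄Θ + ΘᵀB₄)`; in particular
`ΘᵀB₂ = 0`; moreover `M` is symmetric positive definite and `M ≥ 2c ΘᵀΘ`. -/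
theorem statement3 (r m : ℕ) (hr : 1 ≤ r) (hm : 1 ≤ m)
    (η : (Fin r ⊕ Fin m → ℝ) → ℝ)
    (Q : (Fin r ⊕ Fin m → ℝ) → (Fin r ⊕ Fin m → ℝ))
    (Θ : Matrix (Fin m) (Fin m) ℝ) (hΘ : IsUnit Θ.det)
    (c δ : ℝ) (hc : 0 < c) (hδ : 0 < δ)
    (hη : ContDiffAt ℝ 2 η 0)
    (hgrad0 : gradV η 0 = 0)
    (hB : (hessM η 0).PosDef)
    (hQdiff : DifferentiableAt ℝ Q 0) (hQ0 : Q 0 = 0)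
    (hjac : jacM Q 0 = Matrix.fromBlocks 0 0 0 Θ)
    (hdiss : ∀ u : Fin r ⊕ Fin m → ℝ, ‖u‖ < δ →
      gradV η u ⬝ᵥ Q u ≤ -c * (Q u ⬝ᵥ Q u)) :
    hessM η 0 * jacM Q 0 + (jacM Q 0)ᵀ * hessM η 0 =
      -(Matrix.fromBlocks 0 0 0
        (-((hessM η 0).toBlocks₂₂ * Θ + Θᵀ * (hessM η 0).toBlocks₂₂))) ∧
    Θᵀ * (hessM η 0).toBlocks₂₁ = 0 ∧
    (-((hessM η 0).toBlocks₂₂ * Θ + Θᵀ * (hessM η 0).toBlocks₂₂)).IsSymm ∧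
    (-((hessM η 0).toBlocks₂₂ * Θ + Θᵀ * (hessM η 0).toBlocks₂₂)).PosDef ∧
    (-((hessM η 0).toBlocks₂₂ * Θ + Θᵀ * (hessM η 0).toBlocks₂₂)
        - (2 * c) • (Θᵀ * Θ)).PosSemidef := by
  classical
  -- derivative setup
  set f' : ((Fin r ⊕ Fin m) → ℝ) → (((Fin r ⊕ Fin m) → ℝ) →L[ℝ] ℝ) := fderiv ℝ η with hf'def
  have hf'c : ContDiffAt ℝ 1 f' 0 := ContDiffAt.fderiv_right (m := 1) hη (by norm_num)
  have hf'd : DifferentiableAt ℝ f' 0 := hf'c.differentiableAt (by norm_num)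
  set f'' : ((Fin r ⊕ Fin m) → ℝ) →L[ℝ] (((Fin r ⊕ Fin m) → ℝ) →L[ℝ] ℝ) := fderiv ℝ f' 0 with hf''def
  have hA'def : fderiv ℝ Q 0 = fderiv ℝ Q 0 := rfl
  set A' : ((Fin r ⊕ Fin m) → ℝ) →L[ℝ] ((Fin r ⊕ Fin m) → ℝ) := fderiv ℝ Q 0 with hA'
  -- f' 0 = 0
  have hf'0 : f' 0 = 0 := by
    apply ContinuousLinearMap.ext
    intro w
    rw [aux_clm_eval]
    have : ∀ i : (Fin r ⊕ Fin m), f' 0 (Pi.single i 1) = 0 := fun i => congrFun hgrad0 i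
    simp [this]
  -- grad dot as CLM application
  have hgraddot : ∀ u : (Fin r ⊕ Fin m) → ℝ, gradV η u ⬝ᵥ Q u = f' u (Q u) := by
    intro u
    rw [aux_clm_eval]
    simp only [dotProduct, gradV, hf'def]
    exact Finset.sum_congr rfl fun i _ => mul_comm _ _
  -- jacobian mulVec as CLM application
  have hjacvec : ∀ v : (Fin r ⊕ Fin m) → ℝ, A' v = jacM Q 0 *ᵥ v := by
    intro v
    funext i
    rw [aux_clm_eval_vec]
    simp [Matrix.mulVec, dotProduct, jacM, hA']
  -- hessian entries as second derivative
  have hhess : ∀ j k : (Fin r ⊕ Fin m), hessM η 0 j k = f'' (Pi.single j 1) (Pi.single k 1) := by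
    intro j k
    have h1 : HasFDerivAt (fun x => f' x (Pi.single k 1))
        ((ContinuousLinearMap.apply ℝ ℝ (Pi.single k 1)).comp f'') 0 :=
      (ContinuousLinearMap.apply ℝ ℝ (Pi.single k 1 : (Fin r ⊕ Fin m) → ℝ)).hasFDerivAt.comp 0
        hf'd.hasFDerivAt
    have := h1.fderiv
    simp only [hessM, Matrix.of_apply, hf'def]
    rw [show (fun x => fderiv ℝ η x (Pi.single k 1)) = (fun x => f' x (Pi.single k 1)) from rfl,
      this]
    rfl
  -- quadratic form of f''
  have hquad : ∀ w z : (Fin r ⊕ Fin m) → ℝ, f'' w z = w ⬝ᵥ (hessM η 0 *ᵥ z) := by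
    intro w z
    have h1 : f'' w z = (f''.flip z) w := rfl
    rw [h1, aux_clm_eval]
    simp only [ContinuousLinearMap.flip_apply]
    simp only [Matrix.mulVec, dotProduct]
    refine Finset.sum_congr rfl fun j _ => ?_
    rw [aux_clm_eval (f'' (Pi.single j 1)) z]
    rw [Finset.mul_sum, Finset.mul_sum]
    refine Finset.sum_congr rfl fun k _ => ?_
    rw [hhess j k]
    ring
  -- symmetry of the Hessian
  have hsymf : ∀ w z : (Fin r ⊕ Fin m) → ℝ, f'' w z = f'' z w := by
    intro w z
    refine second_derivative_symmetric_of_eventually (f := η) ?_ hf'd.hasFDerivAt w z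
    have hev : ∀ᶠ y in 𝓝 (0 : (Fin r ⊕ Fin m) → ℝ), ContDiffAt ℝ 2 η y :=
      hη.eventually (by norm_num)
    filter_upwards [hev] with y hy
    exact (hy.differentiableAt (by norm_num)).hasFDerivAt
  have hsymH : ∀ a b : (Fin r ⊕ Fin m), hessM η 0 a b = hessM η 0 b a := by
    intro a b; rw [hhess, hhess, hsymf]
  -- core analytic inequality
  have core : ∀ v : (Fin r ⊕ Fin m) → ℝ,
      v ⬝ᵥ ((hessM η 0 * jacM Q 0) *ᵥ v) ≤ -c * ((jacM Q 0 *ᵥ v) ⬝ᵥ (jacM Q 0 *ᵥ v)) := by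
    intro v
    have hline : HasDerivAt (fun t : ℝ => t • v) v 0 := by
      simpa using (hasDerivAt_id (0 : ℝ)).smul_const v
    -- slope of Q along the line
    have hQline : HasDerivAt (fun t : ℝ => Q (t • v)) (A' v) 0 := by
      have := (show HasFDerivAt Q A' ((fun t : ℝ => t • v) 0) by
        simpa using hQdiff.hasFDerivAt).comp_hasDerivAt 0 hline
      exact this
    have hQslope : Tendsto (fun t : ℝ => t⁻¹ • Q (t • v)) (𝓝[≠] 0) (𝓝 (A' v)) := by
      have h := hasDerivAt_iff_tendsto_slope.1 hQline
      refine h.congr' ?_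
      filter_upwards with t
      simp [slope, hQ0, vsub_eq_sub]
    -- slope of f' along the line
    have hGline : HasDerivAt (fun t : ℝ => f' (t • v)) (f'' v) 0 := by
      have := (show HasFDerivAt f' f'' ((fun t : ℝ => t • v) 0) by
        simpa using hf'd.hasFDerivAt).comp_hasDerivAt 0 hline
      exact this
    have hGslope : Tendsto (fun t : ℝ => t⁻¹ • f' (t • v)) (𝓝[≠] 0) (𝓝 (f'' v)) := by
      have h := hasDerivAt_iff_tendsto_slope.1 hGline
      refine h.congr' ?_
      filter_upwards with t
      simp [slope, hf'0, vsub_eq_sub]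
    have hmono : (𝓝[>] (0:ℝ)) ≤ 𝓝[≠] 0 :=
      nhdsWithin_mono 0 (fun t ht => ne_of_gt ht)
    -- limits
    have hL : Tendsto (fun t : ℝ => (t⁻¹ • f' (t • v)) (t⁻¹ • Q (t • v)))
        (𝓝[>] (0:ℝ)) (𝓝 (f'' v (A' v))) := by
      have hc2 : Continuous fun p : ((((Fin r ⊕ Fin m) → ℝ) →L[ℝ] ℝ) × ((Fin r ⊕ Fin m) → ℝ)) => p.1 p.2 :=
        isBoundedBilinearMap_apply.continuous
      exact (hc2.tendsto (f'' v, A' v)).comp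
        ((hGslope.mono_left hmono).prodMk_nhds (hQslope.mono_left hmono))
    have hdotc : Continuous fun w : (Fin r ⊕ Fin m) → ℝ => w ⬝ᵥ w := by
      simp only [dotProduct]
      exact continuous_finset_sum _ fun i _ => (continuous_apply i).mul (continuous_apply i)
    have hR : Tendsto (fun t : ℝ => -c * ((t⁻¹ • Q (t • v)) ⬝ᵥ (t⁻¹ • Q (t • v))))
        (𝓝[>] (0:ℝ)) (𝓝 (-c * (A' v ⬝ᵥ A' v))) :=
      ((hdotc.tendsto (A' v)).comp (hQslope.mono_left hmono)).const_mul _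
    -- eventual inequality
    have hev : ∀ᶠ t : ℝ in 𝓝[>] (0:ℝ),
        (t⁻¹ • f' (t • v)) (t⁻¹ • Q (t • v))
          ≤ -c * ((t⁻¹ • Q (t • v)) ⬝ᵥ (t⁻¹ • Q (t • v))) := by
      have hεpos : 0 < δ / (‖v‖ + 1) := by positivity
      filter_upwards [Ioo_mem_nhdsGT hεpos] with t ht
      have htpos : 0 < t := ht.1
      have hnorm : ‖t • v‖ < δ := by
        rw [norm_smul, Real.norm_eq_abs, abs_of_pos htpos]
        have h1 : t * (‖v‖ + 1) < δ := by
          have := ht.2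
          rw [lt_div_iff₀ (by positivity)] at this
          exact this
        nlinarith [norm_nonneg v]
      have hd := hdiss (t • v) hnorm
      rw [hgraddot] at hd
      have e1 : (t⁻¹ • f' (t • v)) (t⁻¹ • Q (t • v)) = t⁻¹ * t⁻¹ * f' (t • v) (Q (t • v)) := by
        rw [ContinuousLinearMap.smul_apply, _root_.map_smul]
        simp [smul_eq_mul]; ring
      have e2 : (t⁻¹ • Q (t • v)) ⬝ᵥ (t⁻¹ • Q (t • v))
          = t⁻¹ * t⁻¹ * (Q (t • v) ⬝ᵥ Q (t • v)) := by
        rw [smul_dotProduct, dotProduct_smul, smul_eq_mul, smul_eq_mul]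
        ring
      rw [e1, e2]
      have hnn : (0:ℝ) ≤ t⁻¹ * t⁻¹ := by positivity
      calc t⁻¹ * t⁻¹ * f' (t • v) (Q (t • v))
          ≤ t⁻¹ * t⁻¹ * (-c * (Q (t • v) ⬝ᵥ Q (t • v))) := mul_le_mul_of_nonneg_left hd hnn
        _ = -c * (t⁻¹ * t⁻¹ * (Q (t • v) ⬝ᵥ Q (t • v))) := by ring
    have hfin := le_of_tendsto_of_tendsto hL hR hev
    rw [hquad, hjacvec] at hfin
    rwa [Matrix.mulVec_mulVec] at hfin
  -- block decomposition
  set H := hessM η 0 with hH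
  have hHblocks : H = Matrix.fromBlocks H.toBlocks₁₁ H.toBlocks₁₂ H.toBlocks₂₁ H.toBlocks₂₂ :=
    (Matrix.fromBlocks_toBlocks H).symm
  have key : ∀ (x : Fin r → ℝ) (y : Fin m → ℝ),
      x ⬝ᵥ ((H.toBlocks₁₂ * Θ) *ᵥ y) + y ⬝ᵥ ((H.toBlocks₂₂ * Θ) *ᵥ y)
        ≤ -c * ((Θ *ᵥ y) ⬝ᵥ (Θ *ᵥ y)) := by
    intro x y
    have h := core (Sum.elim x y)
    rw [hjac, ← Matrix.mulVec_mulVec] at h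
    rw [show (Matrix.fromBlocks 0 0 0 Θ : Matrix (Fin r ⊕ Fin m) (Fin r ⊕ Fin m) ℝ) *ᵥ Sum.elim x y
        = Sum.elim (0 : Fin r → ℝ) (Θ *ᵥ y) by
      rw [Matrix.fromBlocks_mulVec]; simp] at h
    rw [show (H *ᵥ Sum.elim (0 : Fin r → ℝ) (Θ *ᵥ y))
        = Sum.elim (H.toBlocks₁₂ *ᵥ (Θ *ᵥ y)) (H.toBlocks₂₂ *ᵥ (Θ *ᵥ y)) by
      conv_lhs => rw [hHblocks]
      rw [Matrix.fromBlocks_mulVec]; simp] at h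
    rw [sumElim_dotProduct_sumElim, sumElim_dotProduct_sumElim] at h
    simpa [Matrix.mulVec_mulVec] using h
  -- H₁₂ Θ = 0
  have h12 : H.toBlocks₁₂ * Θ = 0 := by
    ext i j
    have hz : ∀ l : ℝ, l * ((H.toBlocks₁₂ * Θ) i j)
        ≤ -c * ((Θ *ᵥ Pi.single j 1) ⬝ᵥ (Θ *ᵥ Pi.single j 1))
          - Pi.single j 1 ⬝ᵥ ((H.toBlocks₂₂ * Θ) *ᵥ Pi.single j 1) := by
      intro l
      have h := key (l • (Pi.single i 1 : Fin r → ℝ)) (Pi.single j 1)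
      rw [smul_dotProduct] at h
      have e : (Pi.single i 1 : Fin r → ℝ) ⬝ᵥ ((H.toBlocks₁₂ * Θ) *ᵥ Pi.single j 1)
          = (H.toBlocks₁₂ * Θ) i j := by
        simp [single_dotProduct, Matrix.mulVec_single]
      rw [e, smul_eq_mul] at h
      linarith
    have := aux_eq_zero_of_forall_mul_le hz
    simpa using this
  -- symmetry facts about blocks
  have h22sym : (H.toBlocks₂₂)ᵀ = H.toBlocks₂₂ := by
    ext i j
    exact hsymH (Sum.inr j) (Sum.inr i)
  have h21eq : H.toBlocks₂₁ = (H.toBlocks₁₂)ᵀ := by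
    ext i j
    exact hsymH (Sum.inr i) (Sum.inl j)
  -- Θᵀ H₂₁ = 0
  have h21 : Θᵀ * H.toBlocks₂₁ = 0 := by
    rw [h21eq, ← Matrix.transpose_mul, h12, Matrix.transpose_zero]
  -- key inequality for M
  have hM2 : ∀ y : Fin m → ℝ,
      2 * c * ((Θ *ᵥ y) ⬝ᵥ (Θ *ᵥ y))
        ≤ y ⬝ᵥ ((-(H.toBlocks₂₂ * Θ + Θᵀ * H.toBlocks₂₂)) *ᵥ y) := by
    intro y
    have hk := key 0 y
    rw [zero_dotProduct, zero_add] at hk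
    have e : y ⬝ᵥ ((Θᵀ * H.toBlocks₂₂) *ᵥ y) = y ⬝ᵥ ((H.toBlocks₂₂ * Θ) *ᵥ y) := by
      rw [Matrix.dotProduct_mulVec, ← Matrix.mulVec_transpose, Matrix.transpose_mul,
        Matrix.transpose_transpose, h22sym, dotProduct_comm]
    rw [Matrix.neg_mulVec, dotProduct_neg, Matrix.add_mulVec, dotProduct_add, e]
    linarith
  -- assemble the conjunctions
  have hMsymm : (-(H.toBlocks₂₂ * Θ + Θᵀ * H.toBlocks₂₂)).IsSymm := by
    rw [Matrix.IsSymm]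
    rw [Matrix.transpose_neg, Matrix.transpose_add, Matrix.transpose_mul, Matrix.transpose_mul,
      Matrix.transpose_transpose, h22sym]
    rw [add_comm]
  refine ⟨?_, h21, hMsymm, ?_, ?_⟩
  · -- block identity
    rw [hjac]
    rw [hHblocks]
    rw [Matrix.fromBlocks_transpose, Matrix.fromBlocks_multiply, Matrix.fromBlocks_multiply,
      Matrix.fromBlocks_add]
    simp only [Matrix.toBlocks_fromBlocks₁₁, Matrix.toBlocks_fromBlocks₁₂,
      Matrix.toBlocks_fromBlocks₂₁, Matrix.toBlocks_fromBlocks₂₂,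
      Matrix.mul_zero, Matrix.zero_mul, Matrix.transpose_zero, add_zero, zero_add,
      Matrix.fromBlocks_neg, neg_neg, neg_zero, h12, h21]
  · -- positive definiteness of M
    refine Matrix.PosDef.of_dotProduct_mulVec_pos (aux_isHermitian_of_isSymm hMsymm) ?_
    intro y hy
    rw [star_trivial]
    have hΘy : Θ *ᵥ y ≠ 0 := by
      intro h0
      apply hy
      have := congrArg (fun w => Θ⁻¹ *ᵥ w) h0
      simpa [Matrix.mulVec_mulVec, Matrix.nonsing_inv_mul Θ hΘ, Matrix.one_mulVec,
        Matrix.mulVec_zero] using this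
    have hpos : 0 < (Θ *ᵥ y) ⬝ᵥ (Θ *ᵥ y) := by
      rcases lt_or_eq_of_le (aux_dotProduct_self_nonneg (Θ *ᵥ y)) with h | h
      · exact h
      · exact absurd (dotProduct_self_eq_zero.mp h.symm) hΘy
    have := hM2 y
    nlinarith
  · -- M ≥ 2c ΘᵀΘ
    refine Matrix.PosSemidef.of_dotProduct_mulVec_nonneg ?_ ?_
    · apply aux_isHermitian_of_isSymm
      rw [Matrix.IsSymm, Matrix.transpose_sub, Matrix.transpose_smul, Matrix.transpose_mul,
        Matrix.transpose_transpose]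
      rw [Matrix.IsSymm] at hMsymm
      rw [hMsymm]
    · intro y
      rw [star_trivial, Matrix.sub_mulVec, dotProduct_sub]
      have e : y ⬝ᵥ (((2 * c) • (Θᵀ * Θ)) *ᵥ y) = 2 * c * ((Θ *ᵥ y) ⬝ᵥ (Θ *ᵥ y)) := by
        rw [Matrix.smul_mulVec, dotProduct_smul, smul_eq_mul,
          ← Matrix.mulVec_mulVec, Matrix.dotProduct_mulVec, ← Matrix.mulVec_transpose,
          Matrix.transpose_transpose]
      rw [e]
      have := hM2 y
      linarith
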